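/- Let 𝒜 = (A_i : i ∈ [r]) be a presentation of a transversal matroid M on E with support function s_𝒜. If X ⊆ E satisfies |s_𝒜(X)| = r_M(X), then the closure of X in M equals {e ∈ E : s_𝒜({e}) ⊆ s_𝒜(X)}. -/

import Mathlib

/-- `Y` is a partial transversal of the set system `A : Fin r → Set α`. -/
def IsPartialTransversal {α : Type*} {r : ℕ} (A : Fin r → Set α) (Y : Set α) : Prop :=
  ∃ φ : α → Fin r, Set.InjOn φ Y ∧ ∀ y ∈ Y, y ∈ A (φ y)

/-- The `𝒜`-support of `X`: the indices `i` with `X ∩ A_i ≠ ∅`. -/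
def supp {α : Type*} {r : ℕ} (A : Fin r → Set α) (X : Set α) : Set (Fin r) :=
  {i | (X ∩ A i).Nonempty}

/-- The rank of `X` in `M`: the largest size of an independent subset of `X`. -/
noncomputable def rk {α : Type*} (M : Matroid α) (X : Set α) : ℕ :=
  sSup {n | ∃ I, M.Indep I ∧ I ⊆ X ∧ I.ncard = n}

lemma rk_eq_of_basis {α : Type*} [Finite α] {M : Matroid α} {I X : Set α}
    (hI : M.IsBasis I X) : rk M X = I.ncard := by
  have hub : ∀ n ∈ {n | ∃ J, M.Indep J ∧ J ⊆ X ∧ J.ncard = n}, n ≤ I.ncard := by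
    rintro n ⟨J, hJind, hJX, rfl⟩
    obtain ⟨J', hJ', hJJ'⟩ := hJind.subset_isBasis_of_subset hJX hI.subset_ground
    have h1 : J.ncard ≤ J'.ncard := Set.ncard_le_ncard hJJ' (Set.toFinite _)
    have h2 : J'.ncard = I.ncard := by
      rw [Set.ncard_def, Set.ncard_def, hJ'.encard_eq_encard hI]
    omega
  refine le_antisymm (csSup_le ⟨I.ncard, I, hI.indep, hI.subset, rfl⟩ hub) ?_
  exact le_csSup ⟨I.ncard, hub⟩ ⟨I, hI.indep, hI.subset, rfl⟩

/-- If `|s_𝒜(X)| = r_M(X)`, then `cl_M(X) = {e ∈ E : s_𝒜(e) ⊆ s_𝒜(X)}`. -/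
theorem stmt_13 {α : Type*} {r : ℕ} [Finite α] (E : Set α) (A : Fin r → Set α)
    (hA : ∀ i, A i ⊆ E)
    (M : Matroid α) (hME : M.E = E)
    (hInd : ∀ I, M.Indep I ↔ I ⊆ E ∧ IsPartialTransversal A I)
    (X : Set α) (hX : X ⊆ E)
    (h : (supp A X).ncard = rk M X) :
    M.closure X = {e | e ∈ E ∧ supp A {e} ⊆ supp A X} := by
  classical
  have hXE : X ⊆ M.E := hME ▸ hX
  obtain ⟨I, hI⟩ := M.exists_isBasis X hXE
  have hIcard : I.ncard = (supp A X).ncard := by rw [h, rk_eq_of_basis hI]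
  ext e
  simp only [Set.mem_setOf_eq]
  constructor
  · intro he
    refine ⟨hME ▸ M.closure_subset_ground X he, ?_⟩
    rintro i ⟨x, hx, hxA'⟩
    have hxe : x = e := hx
    have hxA : e ∈ A i := hxe ▸ hxA'
    by_cases heX : e ∈ X
    · exact ⟨e, heX, hxA⟩
    by_contra hiX
    -- get the transversal function for I
    obtain ⟨-, φ, hφinj, hφmem⟩ := (hInd I).mp hI.indep
    have himg : φ '' I ⊆ supp A X := by
      rintro j ⟨y, hy, rfl⟩
      exact ⟨y, hI.subset hy, hφmem y hy⟩
    have himgcard : (φ '' I).ncard = (supp A X).ncard := by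
      rw [Set.ncard_image_of_injOn hφinj, hIcard]
    have himgeq : φ '' I = supp A X :=
      Set.eq_of_subset_of_ncard_le himg (le_of_eq himgcard.symm) (Set.toFinite _)
    have hiI : i ∉ φ '' I := himgeq ▸ hiX
    have heI : e ∉ I := fun hh => heX (hI.subset hh)
    -- build a transversal for insert e I
    set ψ : α → Fin r := fun y => if y = e then i else φ y with hψ
    have hins : M.Indep (insert e I) := by
      rw [hInd]
      refine ⟨Set.insert_subset (hME ▸ M.closure_subset_ground X he) (hI.indep.subset_ground.trans hME.subset), ψ, ?_, ?_⟩
      · rw [Set.injOn_insert heI]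
        constructor
        · intro a ha b hb hab
          have ha' : a ≠ e := fun hh => heI (hh ▸ ha)
          have hb' : b ≠ e := fun hh => heI (hh ▸ hb)
          simp only [hψ, if_neg ha', if_neg hb'] at hab
          exact hφinj ha hb hab
        · simp only [hψ, if_pos rfl]
          rintro ⟨y, hy, hyeq⟩
          have hy' : y ≠ e := fun hh => heI (hh ▸ hy)
          simp only [if_neg hy'] at hyeq
          exact hiI ⟨y, hy, hyeq⟩
      · rintro y (rfl | hy)
        · simp only [hψ, if_pos rfl]; exact hxA
        · have hy' : y ≠ e := fun hh => heI (hh ▸ hy)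
          simp only [hψ, if_neg hy']
          exact hφmem y hy
    -- contradiction: e ∉ closure X
    have : e ∉ M.closure I := by
      rw [hI.indep.notMem_closure_iff_of_notMem heI
        (hME ▸ M.closure_subset_ground X he)]
      exact hins
    exact this (hI.closure_eq_closure ▸ he)
  · rintro ⟨heE, hsupp⟩
    by_cases heX : e ∈ X
    · exact M.subset_closure X hXE heX
    by_contra hecl
    have heI : e ∉ I := fun hh => heX (hI.subset hh)
    have hecl' : e ∉ M.closure I := by rwa [hI.closure_eq_closure]
    have hins : M.Indep (insert e I) :=
      (hI.indep.notMem_closure_iff_of_notMem heI (hME ▸ heE)).mp hecl'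
    obtain ⟨-, φ, hφinj, hφmem⟩ := (hInd _).mp hins
    have himg : φ '' (insert e I) ⊆ supp A X := by
      rintro j ⟨y, hy, rfl⟩
      rcases hy with rfl | hy
      · exact hsupp ⟨y, rfl, hφmem y (Set.mem_insert y I)⟩
      · exact ⟨y, hI.subset hy, hφmem y (Set.mem_insert_of_mem e hy)⟩
    have hle : (insert e I).ncard ≤ (supp A X).ncard := by
      rw [← Set.ncard_image_of_injOn hφinj]
      exact Set.ncard_le_ncard himg (Set.toFinite _)
    rw [Set.ncard_insert_of_notMem heI (Set.toFinite _), ← hIcard] at hle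
    omega
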